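/- arXiv:math/0609380 — 3 statements merged into one kernel-verified Lean document; each statement's English description precedes it below -/
import Mathlib

section
/- Let m ≥ 1 be an integer and let Q(z,χ,τ) = τ + i·τ^m·z·χ + τ^{m+1}·Θ(z,χ,τ) with Θ ∈ ℂ[[z,χ,τ]]. Let F, G ∈ ℂ[[z,w]] with F(0,0) = G(0,0) = 0, G(z,0) = 0, F(z,0) ≢ 0, satisfying the formal identity G(z, Q(z,χ,τ)) = Q( F(z,Q(z,χ,τ)), F̄(χ,τ), Ḡ(χ,τ) ), where F̄ and Ḡ denote the power series obtained by conjugating the coefficients of F and G. Then for every ℓ ≤ m, the power series coefficient ∂^ℓG/∂w^ℓ(z,0) is a constant independent of z, and this constant is real. -/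
open scoped ComplexConjugate

open Classical in
/-- Composition of multivariate formal power series: `f` in variables `σ` with
the substitution `g : σ → MvPowerSeries τ R`.  This gives the usual substitution
whenever each `g i` has zero constant term. -/
noncomputable def pscomp {σ τ : Type*} [Fintype σ] {R : Type*} [CommRing R]
    (f : MvPowerSeries σ R) (g : σ → MvPowerSeries τ R) : MvPowerSeries τ R :=
  fun d => MvPowerSeries.coeff d
    (MvPolynomial.aeval g
      (MvPowerSeries.trunc R
        (Finsupp.equivFunOnFinite.symm fun _ => (d.sum fun _ n => n) + 1) f))

/-- Conjugation of the coefficients of a formal power series over `ℂ`. -/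
noncomputable def psConj {σ : Type*} (f : MvPowerSeries σ ℂ) : MvPowerSeries σ ℂ :=
  MvPowerSeries.map (starRingEnd ℂ) f

namespace Stmt12Aux
open MvPowerSeries

open Classical in
lemma pscomp_def {σ τ : Type*} [Fintype σ] {R : Type*} [CommRing R]
    (f : MvPowerSeries σ R) (g : σ → MvPowerSeries τ R) (d : τ →₀ ℕ) :
    pscomp f g d = MvPowerSeries.coeff (R := R) d
      (MvPolynomial.aeval g
        (MvPowerSeries.trunc R
          (Finsupp.equivFunOnFinite.symm fun _ => (d.sum fun _ n => n) + 1) f)) := rfl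

open Classical in
lemma coeff_aeval_trunc {σ τ : Type*} [Fintype σ] {R : Type*} [CommRing R]
    (f : MvPowerSeries σ R) (g : σ → MvPowerSeries τ R) (d : τ →₀ ℕ) (n : σ →₀ ℕ) :
    MvPowerSeries.coeff (R := R) d (MvPolynomial.aeval g (MvPowerSeries.trunc R n f)) =
      ∑ e ∈ Finset.Iio n,
        MvPowerSeries.coeff (R := R) e f * MvPowerSeries.coeff (R := R) d (∏ i, g i ^ e i) := by
  have htr : MvPowerSeries.trunc R n f =
      ∑ e ∈ Finset.Iio n, MvPolynomial.monomial e (MvPowerSeries.coeff (R := R) e f) := rfl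
  rw [htr, map_sum, map_sum]
  refine Finset.sum_congr rfl fun e _ => ?_
  have hmono : (MvPolynomial.monomial e) (MvPowerSeries.coeff (R := R) e f) =
      MvPowerSeries.coeff (R := R) e f • (MvPolynomial.monomial e) (1 : R) := by
    rw [MvPolynomial.smul_monomial, smul_eq_mul, mul_one]
  rw [hmono, map_smul, map_smul, smul_eq_mul]
  congr 1
  rw [MvPolynomial.monomial_eq, map_one, one_mul, map_finsuppProd]
  simp only [map_pow, MvPolynomial.aeval_X]
  rw [Finsupp.prod_pow]

open Classical in
lemma coeff_pscomp {σ τ : Type*} [Fintype σ] {R : Type*} [CommRing R]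
    (f : MvPowerSeries σ R) (g : σ → MvPowerSeries τ R) (d : τ →₀ ℕ) :
    MvPowerSeries.coeff (R := R) d (pscomp f g) =
      ∑ e ∈ Finset.Iio (Finsupp.equivFunOnFinite.symm fun _ => (d.sum fun _ n => n) + 1),
        MvPowerSeries.coeff (R := R) e f * MvPowerSeries.coeff (R := R) d (∏ i, g i ^ e i) := by
  rw [MvPowerSeries.coeff_apply, pscomp_def, coeff_aeval_trunc]

lemma fin2_decomp (u : Fin 2 →₀ ℕ) :
    u = Finsupp.single 0 (u 0) + Finsupp.single 1 (u 1) := by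
  ext i; fin_cases i <;> simp [Finsupp.single_apply]

open Classical in
lemma mem_Iio_of {n : ℕ} {ι : Type*} [Fintype ι] [Nonempty ι] (e : ι →₀ ℕ)
    (h : ∀ i, e i < n) :
    e ∈ Finset.Iio (Finsupp.equivFunOnFinite.symm fun _ => n) := by
  rw [Finset.mem_Iio]
  constructor
  · intro i; exact (h i).le
  · intro he
    have h2 := Finsupp.le_def.mp he (Classical.arbitrary ι)
    simp only [Finsupp.coe_equivFunOnFinite_symm] at h2
    exact absurd h2 (not_le.2 (h _))

lemma prodX12 {R : Type*} [CommRing R] (e : Fin 2 →₀ ℕ) :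
    (∏ i, (![MvPowerSeries.X 1, MvPowerSeries.X 2] :
        Fin 2 → MvPowerSeries (Fin 3) R) i ^ e i) =
      MvPowerSeries.monomial (R := R) (Finsupp.single 1 (e 0) + Finsupp.single 2 (e 1)) 1 := by
  rw [Fin.prod_univ_two]
  simp only [Matrix.cons_val_zero, Matrix.cons_val_one, Matrix.head_cons]
  rw [X_pow_eq, X_pow_eq, monomial_mul_monomial, one_mul]

lemma pair_apply (a b : ℕ) :
    ((Finsupp.single (0 : Fin 2) a + Finsupp.single (1 : Fin 2) b : Fin 2 →₀ ℕ) 0 = a) ∧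
    ((Finsupp.single (0 : Fin 2) a + Finsupp.single (1 : Fin 2) b : Fin 2 →₀ ℕ) 1 = b) := by
  constructor
  · rw [Finsupp.add_apply, Finsupp.single_apply, Finsupp.single_apply,
      if_pos rfl, if_neg (by decide), add_zero]
  · rw [Finsupp.add_apply, Finsupp.single_apply, Finsupp.single_apply,
      if_neg (by decide), if_pos rfl, zero_add]

lemma triple12_apply (a b : ℕ) :
    ((Finsupp.single (1 : Fin 3) a + Finsupp.single (2 : Fin 3) b : Fin 3 →₀ ℕ) 0 = 0) ∧
    ((Finsupp.single (1 : Fin 3) a + Finsupp.single (2 : Fin 3) b : Fin 3 →₀ ℕ) 1 = a) ∧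
    ((Finsupp.single (1 : Fin 3) a + Finsupp.single (2 : Fin 3) b : Fin 3 →₀ ℕ) 2 = b) := by
  refine ⟨?_, ?_, ?_⟩
  · rw [Finsupp.add_apply, Finsupp.single_apply, Finsupp.single_apply,
      if_neg (by decide), if_neg (by decide), add_zero]
  · rw [Finsupp.add_apply, Finsupp.single_apply, Finsupp.single_apply,
      if_pos rfl, if_neg (by decide), add_zero]
  · rw [Finsupp.add_apply, Finsupp.single_apply, Finsupp.single_apply,
      if_neg (by decide), if_pos rfl, zero_add]

lemma triple02_apply (a b : ℕ) :
    ((Finsupp.single (0 : Fin 3) a + Finsupp.single (2 : Fin 3) b : Fin 3 →₀ ℕ) 0 = a) ∧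
    ((Finsupp.single (0 : Fin 3) a + Finsupp.single (2 : Fin 3) b : Fin 3 →₀ ℕ) 1 = 0) ∧
    ((Finsupp.single (0 : Fin 3) a + Finsupp.single (2 : Fin 3) b : Fin 3 →₀ ℕ) 2 = b) := by
  refine ⟨?_, ?_, ?_⟩
  · rw [Finsupp.add_apply, Finsupp.single_apply, Finsupp.single_apply,
      if_pos rfl, if_neg (by decide), add_zero]
  · rw [Finsupp.add_apply, Finsupp.single_apply, Finsupp.single_apply,
      if_neg (by decide), if_neg (by decide), add_zero]
  · rw [Finsupp.add_apply, Finsupp.single_apply, Finsupp.single_apply,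
      if_neg (by decide), if_pos rfl, zero_add]

lemma single2_apply (c : ℕ) :
    ((Finsupp.single (2 : Fin 3) c : Fin 3 →₀ ℕ) 0 = 0) ∧
    ((Finsupp.single (2 : Fin 3) c : Fin 3 →₀ ℕ) 1 = 0) ∧
    ((Finsupp.single (2 : Fin 3) c : Fin 3 →₀ ℕ) 2 = c) := by
  refine ⟨?_, ?_, ?_⟩
  · rw [Finsupp.single_apply, if_neg (by decide)]
  · rw [Finsupp.single_apply, if_neg (by decide)]
  · rw [Finsupp.single_apply, if_pos rfl]

lemma coeff_pscomp_X12 {R : Type*} [CommRing R] (f : MvPowerSeries (Fin 2) R) (u : Fin 3 →₀ ℕ) :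
    MvPowerSeries.coeff (R := R) u (pscomp f ![MvPowerSeries.X 1, MvPowerSeries.X 2]) =
      if u 0 = 0 then
        MvPowerSeries.coeff (R := R) (Finsupp.single 0 (u 1) + Finsupp.single 1 (u 2)) f
      else 0 := by
  classical
  rw [coeff_pscomp]
  by_cases hu0 : u 0 = 0
  · rw [if_pos hu0]
    rw [Finset.sum_eq_single_of_mem (Finsupp.single 0 (u 1) + Finsupp.single 1 (u 2))]
    · rw [prodX12, (pair_apply (u 1) (u 2)).1, (pair_apply (u 1) (u 2)).2]
      have hu : Finsupp.single (1 : Fin 3) (u 1) + Finsupp.single 2 (u 2) = u := by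
        ext i
        fin_cases i
        · exact ((triple12_apply (u 1) (u 2)).1).trans hu0.symm
        · exact (triple12_apply (u 1) (u 2)).2.1
        · exact (triple12_apply (u 1) (u 2)).2.2
      rw [hu, MvPowerSeries.coeff_monomial_same, mul_one]
    · apply mem_Iio_of
      intro i
      have hs : (u.sum fun _ n => n) = u 0 + u 1 + u 2 := by
        rw [Finsupp.sum_fintype _ _ (fun _ => rfl), Fin.sum_univ_three]
      rw [hs]
      fin_cases i <;> simp [Finsupp.single_apply] <;> omega
    · intro e _ hne
      rw [prodX12, MvPowerSeries.coeff_monomial]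
      rw [if_neg, mul_zero]
      intro hu
      apply hne
      have h1 : u 1 = e 0 := by rw [hu]; exact (triple12_apply (e 0) (e 1)).2.1
      have h2 : u 2 = e 1 := by rw [hu]; exact (triple12_apply (e 0) (e 1)).2.2
      rw [fin2_decomp e, ← h1, ← h2]
  · rw [if_neg hu0]
    apply Finset.sum_eq_zero
    intro e _
    rw [prodX12, MvPowerSeries.coeff_monomial]
    rw [if_neg, mul_zero]
    intro hu
    apply hu0
    rw [hu]
    exact (triple12_apply (e 0) (e 1)).1


/-! ### weights -/

def wt (a b c : ℕ) (u : Fin 3 →₀ ℕ) : ℕ := a * u 0 + b * u 1 + c * u 2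

lemma wt_add (a b c : ℕ) (u v : Fin 3 →₀ ℕ) :
    wt a b c (u + v) = wt a b c u + wt a b c v := by
  simp only [wt, Finsupp.add_apply]; ring

def Wge (a b c k : ℕ) (f : MvPowerSeries (Fin 3) ℂ) : Prop :=
  ∀ u : Fin 3 →₀ ℕ, MvPowerSeries.coeff (R := ℂ) u f ≠ 0 → k ≤ wt a b c u

lemma Wge.coeff_eq_zero {a b c k : ℕ} {f : MvPowerSeries (Fin 3) ℂ}
    (h : Wge a b c k f) {d : Fin 3 →₀ ℕ} (hd : wt a b c d < k) :
    MvPowerSeries.coeff (R := ℂ) d f = 0 := by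
  by_contra hc; exact absurd (h d hc) (not_le.2 hd)

lemma Wge_zero_le (a b c : ℕ) (f : MvPowerSeries (Fin 3) ℂ) : Wge a b c 0 f :=
  fun _ _ => Nat.zero_le _

lemma Wge.mono {a b c k : ℕ} {f : MvPowerSeries (Fin 3) ℂ}
    (h : Wge a b c k f) {k' : ℕ} (hk : k' ≤ k) : Wge a b c k' f :=
  fun u hu => hk.trans (h u hu)

lemma Wge.add {a b c k : ℕ} {f g : MvPowerSeries (Fin 3) ℂ}
    (hf : Wge a b c k f) (hg : Wge a b c k g) : Wge a b c k (f + g) := by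
  intro u hu
  rw [map_add] at hu
  by_cases h1 : MvPowerSeries.coeff (R := ℂ) u f = 0
  · exact hg u (by simpa [h1] using hu)
  · exact hf u h1

lemma Wge.mul {a b c k l : ℕ} {f g : MvPowerSeries (Fin 3) ℂ}
    (hf : Wge a b c k f) (hg : Wge a b c l g) : Wge a b c (k + l) (f * g) := by
  intro u hu
  rw [MvPowerSeries.coeff_mul] at hu
  obtain ⟨p, hp, hne⟩ := Finset.exists_ne_zero_of_sum_ne_zero hu
  have h1 : MvPowerSeries.coeff (R := ℂ) p.1 f ≠ 0 := fun h => hne (by rw [h, zero_mul])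
  have h2 : MvPowerSeries.coeff (R := ℂ) p.2 g ≠ 0 := fun h => hne (by rw [h, mul_zero])
  calc k + l ≤ wt a b c p.1 + wt a b c p.2 := add_le_add (hf _ h1) (hg _ h2)
    _ = wt a b c u := by rw [← wt_add, Finset.HasAntidiagonal.mem_antidiagonal.mp hp]

lemma Wge.pow {a b c k : ℕ} {f : MvPowerSeries (Fin 3) ℂ}
    (hf : Wge a b c k f) (n : ℕ) : Wge a b c (n * k) (f ^ n) := by
  induction n with
  | zero => simpa using Wge_zero_le a b c _
  | succ n ih =>
      have h2 := ih.mul hf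
      rw [← pow_succ] at h2
      simpa [Nat.succ_mul] using h2

lemma Wge_X (a b c : ℕ) (i : Fin 3) :
    Wge a b c (![a, b, c] i) (MvPowerSeries.X i) := by
  intro u hu
  classical
  rw [MvPowerSeries.coeff_X] at hu
  split_ifs at hu with h
  · subst h
    fin_cases i <;> simp [wt, Finsupp.single_apply]
  · simp at hu

section QFacts

variable (m : ℕ) (Θ : MvPowerSeries (Fin 3) ℂ)

/-- the remainder `Q - τ`. -/
noncomputable def Rser : MvPowerSeries (Fin 3) ℂ :=
  MvPowerSeries.C (σ := Fin 3) (R := ℂ) Complex.I *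
      (MvPowerSeries.X 2 ^ m * MvPowerSeries.X 0 * MvPowerSeries.X 1) +
    MvPowerSeries.X 2 ^ (m + 1) * Θ

lemma WgeR (b : ℕ) (hb : 1 ≤ b) : Wge 0 b 1 (m + 1) (Rser m Θ) := by
  have hX2 : Wge 0 b 1 1 (MvPowerSeries.X (2 : Fin 3)) := by
    simpa using Wge_X 0 b 1 2
  have hX1 : Wge 0 b 1 b (MvPowerSeries.X (1 : Fin 3)) := by
    simpa using Wge_X 0 b 1 1
  have t1 : Wge 0 b 1 (m + 1)
      (MvPowerSeries.C (σ := Fin 3) (R := ℂ) Complex.I *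
        (MvPowerSeries.X 2 ^ m * MvPowerSeries.X 0 * MvPowerSeries.X 1)) := by
    have h2 := (Wge_zero_le 0 b 1 (MvPowerSeries.C (σ := Fin 3) (R := ℂ) Complex.I)).mul
      ((((hX2.pow m).mul (Wge_zero_le 0 b 1 (MvPowerSeries.X 0))).mul hX1))
    exact h2.mono (by omega)
  have t2 : Wge 0 b 1 (m + 1) (MvPowerSeries.X (2 : Fin 3) ^ (m + 1) * Θ) := by
    have h2 := (hX2.pow (m + 1)).mul (Wge_zero_le 0 b 1 Θ)
    exact h2.mono (by omega)
  exact t1.add t2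

lemma WgeQpow (Q : MvPowerSeries (Fin 3) ℂ) (hQR : Q = MvPowerSeries.X 2 + Rser m Θ)
    (b : ℕ) (hb : 1 ≤ b) (n : ℕ) :
    Wge 0 b 1 (m + 1) (Q ^ n - MvPowerSeries.X 2 ^ n) := by
  induction n with
  | zero =>
      intro u hu
      rw [pow_zero, pow_zero, sub_self, map_zero] at hu
      exact absurd rfl hu
  | succ n ih =>
      have heq : Q ^ (n + 1) - MvPowerSeries.X 2 ^ (n + 1) =
          (Q ^ n - MvPowerSeries.X 2 ^ n) * Q +
            MvPowerSeries.X 2 ^ n * Rser m Θ := by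
        rw [hQR]; ring
      rw [heq]
      have t1 := ih.mul (Wge_zero_le 0 b 1 Q)
      have t2 := (Wge_zero_le 0 b 1 (MvPowerSeries.X 2 ^ n)).mul (WgeR m Θ b hb)
      exact (t1.mono (by omega)).add (t2.mono (by omega))

lemma coeff_X0aQb (Q : MvPowerSeries (Fin 3) ℂ) (hQR : Q = MvPowerSeries.X 2 + Rser m Θ)
    (a n : ℕ) (d : Fin 3 →₀ ℕ) (hd : wt 0 (m + 1) 1 d ≤ m) :
    MvPowerSeries.coeff (R := ℂ) d (MvPowerSeries.X 0 ^ a * Q ^ n) =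
      if d = Finsupp.single 0 a + Finsupp.single 2 n then 1 else 0 := by
  classical
  have hsplit : MvPowerSeries.X (0 : Fin 3) ^ a * Q ^ n =
      MvPowerSeries.X 0 ^ a * MvPowerSeries.X 2 ^ n +
        MvPowerSeries.X 0 ^ a * (Q ^ n - MvPowerSeries.X 2 ^ n) := by ring
  rw [hsplit, map_add]
  have hW : Wge 0 (m + 1) 1 (0 + (m + 1))
      (MvPowerSeries.X 0 ^ a * (Q ^ n - MvPowerSeries.X 2 ^ n)) :=
    (Wge_zero_le 0 (m + 1) 1 (MvPowerSeries.X 0 ^ a)).mul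
      (WgeQpow m Θ Q hQR (m + 1) (by omega) n)
  have h2 : MvPowerSeries.coeff (R := ℂ) d
      (MvPowerSeries.X 0 ^ a * (Q ^ n - MvPowerSeries.X 2 ^ n)) = 0 :=
    hW.coeff_eq_zero (by omega)
  rw [h2, add_zero, X_pow_eq, X_pow_eq, monomial_mul_monomial, one_mul,
    MvPowerSeries.coeff_monomial]

end QFacts

lemma Wge_h3 (G : MvPowerSeries (Fin 2) ℂ)
    (hGz0 : ∀ j : ℕ, MvPowerSeries.coeff (R := ℂ) (Finsupp.single (0 : Fin 2) j) G = 0)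
    (a b : ℕ) :
    Wge a b 1 1 (pscomp (psConj G) ![MvPowerSeries.X 1, MvPowerSeries.X 2]) := by
  intro u hu
  rw [coeff_pscomp_X12] at hu
  split_ifs at hu with h0
  · rcases Nat.eq_zero_or_pos (u 2) with h2 | h2
    · exfalso
      apply hu
      rw [h2, Finsupp.single_zero, add_zero, psConj, MvPowerSeries.coeff_map,
        hGz0 (u 1), map_zero]
    · calc 1 ≤ u 2 := h2
        _ ≤ wt a b 1 u := by simp only [wt, one_mul]; omega
  · exact absurd rfl hu

lemma Wge_h2 (F : MvPowerSeries (Fin 2) ℂ)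
    (hF0 : MvPowerSeries.constantCoeff (σ := Fin 2) (R := ℂ) F = 0)
    (a b : ℕ) (hb : 1 ≤ b) :
    Wge a b 1 1 (pscomp (psConj F) ![MvPowerSeries.X 1, MvPowerSeries.X 2]) := by
  intro u hu
  rw [coeff_pscomp_X12] at hu
  split_ifs at hu with h0
  · rcases Nat.eq_zero_or_pos (u 1 + u 2) with h2 | h2
    · exfalso
      apply hu
      have e1 : u 1 = 0 := by omega
      have e2 : u 2 = 0 := by omega
      rw [e1, e2, Finsupp.single_zero, Finsupp.single_zero, add_zero, psConj,
        MvPowerSeries.coeff_map, MvPowerSeries.coeff_zero_eq_constantCoeff_apply,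
        hF0, map_zero]
    · have h3 : u 1 + u 2 ≤ wt a b 1 u := by
        simp only [wt, one_mul]
        nlinarith
      omega
  · exact absurd rfl hu

end Stmt12Aux


open Stmt12Aux

/-- Case `n = 1` of Lemma 3.2: if `Q(z,χ,τ) = τ + iτ^m zχ + τ^{m+1}Θ` and
`(F,G)` satisfies the mapping identity
`G(z,Q(z,χ,τ)) = Q(F(z,Q(z,χ,τ)), F̄(χ,τ), Ḡ(χ,τ))` with `F(0,0)=G(0,0)=0`,
`G(z,0)=0`, `F(z,0) ≢ 0`, then for `ℓ ≤ m` the coefficient function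
`∂^ℓG/∂w^ℓ(z,0)` is a real constant.  Variables: `Fin 3 = (z,χ,τ)`,
`Fin 2 = (z,w)` (resp. `(χ,τ)`). -/
theorem stmt12 (m : ℕ) (hm : 1 ≤ m)
    (Θ Q : MvPowerSeries (Fin 3) ℂ)
    (hQ : Q = MvPowerSeries.X 2 +
      MvPowerSeries.C (σ := Fin 3) (R := ℂ) Complex.I *
        (MvPowerSeries.X 2 ^ m * MvPowerSeries.X 0 * MvPowerSeries.X 1) +
      MvPowerSeries.X 2 ^ (m + 1) * Θ)
    (F G : MvPowerSeries (Fin 2) ℂ)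
    (hF0 : MvPowerSeries.constantCoeff (σ := Fin 2) (R := ℂ) F = 0)
    (hG0 : MvPowerSeries.constantCoeff (σ := Fin 2) (R := ℂ) G = 0)
    (hGz0 : ∀ j : ℕ, MvPowerSeries.coeff (R := ℂ) (Finsupp.single (0 : Fin 2) j) G = 0)
    (hFz0 : ∃ j : ℕ, MvPowerSeries.coeff (R := ℂ) (Finsupp.single (0 : Fin 2) j) F ≠ 0)
    (hmap : pscomp G ![MvPowerSeries.X 0, Q] =
      pscomp Q ![pscomp F ![MvPowerSeries.X 0, Q],
        pscomp (psConj F) ![MvPowerSeries.X 1, MvPowerSeries.X 2],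
        pscomp (psConj G) ![MvPowerSeries.X 1, MvPowerSeries.X 2]]) :
    ∀ ℓ : ℕ, ℓ ≤ m →
      (∀ j : ℕ, 1 ≤ j →
        MvPowerSeries.coeff (R := ℂ)
          (Finsupp.single (0 : Fin 2) j + Finsupp.single (1 : Fin 2) ℓ) G = 0) ∧
      conj (MvPowerSeries.coeff (R := ℂ) (Finsupp.single (1 : Fin 2) ℓ) G) =
        MvPowerSeries.coeff (R := ℂ) (Finsupp.single (1 : Fin 2) ℓ) G := by
  classical
  have hQR : Q = MvPowerSeries.X 2 + Rser m Θ := by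
    rw [hQ, Rser, add_assoc]
  set h1 : MvPowerSeries (Fin 3) ℂ := pscomp F ![MvPowerSeries.X 0, Q] with hh1
  set h2 : MvPowerSeries (Fin 3) ℂ :=
    pscomp (psConj F) ![MvPowerSeries.X 1, MvPowerSeries.X 2] with hh2
  set h3 : MvPowerSeries (Fin 3) ℂ :=
    pscomp (psConj G) ![MvPowerSeries.X 1, MvPowerSeries.X 2] with hh3
  intro ℓ hℓ
  have key : ∀ j : ℕ, 1 ≤ j + ℓ →
      MvPowerSeries.coeff (R := ℂ)
          (Finsupp.single (0 : Fin 2) j + Finsupp.single (1 : Fin 2) ℓ) G =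
        if j = 0 then conj (MvPowerSeries.coeff (R := ℂ) (Finsupp.single (1 : Fin 2) ℓ) G)
        else 0 := by
    intro j hjl
    set d : Fin 3 →₀ ℕ := Finsupp.single 0 j + Finsupp.single 2 ℓ with hd
    have hd0 : d 0 = j := by rw [hd]; exact (triple02_apply j ℓ).1
    have hd1 : d 1 = 0 := by rw [hd]; exact (triple02_apply j ℓ).2.1
    have hd2 : d 2 = ℓ := by rw [hd]; exact (triple02_apply j ℓ).2.2
    have hdsum : (d.sum fun _ n => n) = j + ℓ := by
      rw [Finsupp.sum_fintype _ _ (fun _ => rfl), Fin.sum_univ_three, hd0, hd1, hd2]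
      omega
    have hwd : wt 0 (m + 1) 1 d = ℓ := by
      simp [wt, hd0, hd1, hd2]
    -- the left-hand side
    have hL : MvPowerSeries.coeff (R := ℂ) d (pscomp G ![MvPowerSeries.X 0, Q]) =
        MvPowerSeries.coeff (R := ℂ)
          (Finsupp.single (0 : Fin 2) j + Finsupp.single (1 : Fin 2) ℓ) G := by
      rw [coeff_pscomp]
      rw [Finset.sum_eq_single_of_mem
        (Finsupp.single (0 : Fin 2) j + Finsupp.single (1 : Fin 2) ℓ)]
      · rw [Fin.prod_univ_two]
        simp only [Matrix.cons_val_zero, Matrix.cons_val_one, Matrix.head_cons,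
          (pair_apply j ℓ).1, (pair_apply j ℓ).2]
        rw [coeff_X0aQb m Θ Q hQR j ℓ d (by omega), if_pos hd, mul_one]
      · apply mem_Iio_of
        intro i
        rw [hdsum]
        fin_cases i <;> simp [Finsupp.single_apply] <;> omega
      · intro e _ hne
        rw [Fin.prod_univ_two]
        simp only [Matrix.cons_val_zero, Matrix.cons_val_one, Matrix.head_cons]
        rw [coeff_X0aQb m Θ Q hQR (e 0) (e 1) d (by omega)]
        rw [if_neg, mul_zero]
        intro hdd
        apply hne
        have g0 : j = e 0 := by
          rw [← hd0, hdd]; exact (triple02_apply (e 0) (e 1)).1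
        have g2 : ℓ = e 1 := by
          rw [← hd2, hdd]; exact (triple02_apply (e 0) (e 1)).2.2
        rw [fin2_decomp e, ← g0, ← g2]
    -- the right-hand side
    have hR : MvPowerSeries.coeff (R := ℂ) d (pscomp Q ![h1, h2, h3]) =
        if j = 0 then conj (MvPowerSeries.coeff (R := ℂ) (Finsupp.single (1 : Fin 2) ℓ) G)
        else 0 := by
      have hwt21 : wt 0 1 1 (Finsupp.single (2 : Fin 3) 1) = 1 := by
        simp [wt, (single2_apply 1).1, (single2_apply 1).2.1, (single2_apply 1).2.2]
      rw [coeff_pscomp]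
      rw [Finset.sum_eq_single_of_mem (Finsupp.single (2 : Fin 3) 1)]
      · rw [Fin.prod_univ_three]
        simp only [Matrix.cons_val_zero, Matrix.cons_val_one, Matrix.head_cons,
          Matrix.cons_val_two, Matrix.tail_cons, (single2_apply 1).1,
          (single2_apply 1).2.1, (single2_apply 1).2.2, pow_zero, pow_one, one_mul]
        have hQcoeff : MvPowerSeries.coeff (R := ℂ) (Finsupp.single (2 : Fin 3) 1) Q = 1 := by
          rw [hQR, map_add, MvPowerSeries.coeff_X, if_pos rfl,
            (WgeR m Θ 1 le_rfl).coeff_eq_zero (by rw [hwt21]; omega), add_zero]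
        rw [hQcoeff, one_mul, hh3, coeff_pscomp_X12, hd0, hd1, hd2]
        rw [show (Finsupp.single (0 : Fin 2) (0 : ℕ) : Fin 2 →₀ ℕ) = 0 from
          Finsupp.single_zero _, zero_add, psConj, MvPowerSeries.coeff_map]
      · apply mem_Iio_of
        intro i
        rw [hdsum]
        fin_cases i <;> simp [Finsupp.single_apply] <;> omega
      · intro e _ hne
        by_cases hc : m + 1 ≤ e 1 + e 2
        · rw [Fin.prod_univ_three]
          simp only [Matrix.cons_val_zero, Matrix.cons_val_one, Matrix.head_cons,
            Matrix.cons_val_two, Matrix.tail_cons]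
          have hW : Wge 0 (m + 1) 1 (0 + e 1 * 1 + e 2 * 1)
              (h1 ^ e 0 * h2 ^ e 1 * h3 ^ e 2) :=
            ((Wge_zero_le 0 (m + 1) 1 (h1 ^ e 0)).mul
              ((Wge_h2 F hF0 0 (m + 1) (by omega)).pow (e 1))).mul
              ((Wge_h3 G hGz0 0 (m + 1)).pow (e 2))
          rw [hW.coeff_eq_zero (by omega), mul_zero]
        · have hwte : wt 0 1 1 e = e 1 + e 2 := by simp [wt]
          have hQe : MvPowerSeries.coeff (R := ℂ) e Q = 0 := by
            rw [hQR, map_add, MvPowerSeries.coeff_X, if_neg hne,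
              (WgeR m Θ 1 le_rfl).coeff_eq_zero (by rw [hwte]; omega), zero_add]
          rw [hQe, zero_mul]
    rw [← hL, hmap, hR]
  constructor
  · intro j hj
    rw [key j (by omega), if_neg (by omega)]
  · rcases Nat.eq_zero_or_pos ℓ with h0 | h0
    · subst h0
      have hz : MvPowerSeries.coeff (R := ℂ) (Finsupp.single (1 : Fin 2) 0) G = 0 := by
        rw [show (Finsupp.single (1 : Fin 2) (0 : ℕ) : Fin 2 →₀ ℕ) = 0 from
          Finsupp.single_zero _, MvPowerSeries.coeff_zero_eq_constantCoeff_apply, hG0]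
      rw [hz, map_zero]
    · have hk := key 0 (by omega)
      rw [show (Finsupp.single (0 : Fin 2) (0 : ℕ) : Fin 2 →₀ ℕ) = 0 from
        Finsupp.single_zero _, zero_add, if_pos rfl] at hk
      exact hk.symm
end

section
/- Let F(s,u) be a real-analytic function near (0,0) ∈ ℝ×ℝ with F(0,0) = 0, and suppose λ := ∂F/∂u(0,0) is not a positive integer. Then there is at most one real-analytic function u defined near 0 ∈ ℝ with u(0) = 0 satisfying the singular ODE s·u'(s) = F(s, u(s)) for all s near 0. -/
open scoped Topology

open Filter Asymptotics

/-- Uniqueness in the Briot–Bouquet theorem: if `F` is real-analytic near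
`(0,0)` with `F(0,0) = 0` and `λ = ∂F/∂u(0,0)` is not a positive integer,
then there is at most one real-analytic `u` near `0` with `u(0) = 0` and
`s·u'(s) = F(s,u(s))` near `0`. -/
theorem stmt14 (F : ℝ × ℝ → ℝ) (hF : AnalyticAt ℝ F (0, 0)) (hF0 : F (0, 0) = 0)
    (hlam : ¬ ∃ n : ℕ, 0 < n ∧ fderiv ℝ F (0, 0) (0, 1) = n) :
    ∀ u v : ℝ → ℝ,
      AnalyticAt ℝ u 0 → u 0 = 0 → (∀ᶠ s in 𝓝 0, s * deriv u s = F (s, u s)) →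
      AnalyticAt ℝ v 0 → v 0 = 0 → (∀ᶠ s in 𝓝 0, s * deriv v s = F (s, v s)) →
      ∀ᶠ s in 𝓝 0, u s = v s := by
  intro u v hu hu0 hue hv hv0 hve
  by_contra hne
  set L := fderiv ℝ F (0, 0) with hLdef
  set lam : ℝ := L (0, 1) with hlamdef
  set w : ℝ → ℝ := fun s => u s - v s with hwdef
  have hw : AnalyticAt ℝ w 0 := hu.sub hv
  have hw0 : w 0 = 0 := by simp [hwdef, hu0, hv0]
  -- the order of w at 0 is a finite natural number m
  have hordne : analyticOrderAt w 0 ≠ ⊤ := fun htop =>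
    hne (((analyticOrderAt_eq_top).mp htop).mono fun s hs => sub_eq_zero.mp hs)
  obtain ⟨m, hm⟩ := WithTop.ne_top_iff_exists.mp hordne
  obtain ⟨g, hg, hg0, hgeq⟩ := (hw.analyticOrderAt_eq_natCast (n := m)).mp hm.symm
  have hgeq' : ∀ᶠ s in 𝓝 (0:ℝ), w s = s ^ m * g s := by
    filter_upwards [hgeq] with s hs
    simpa using hs
  have hm1 : 1 ≤ m := by
    rcases Nat.eq_zero_or_pos m with h0 | h
    · exfalso
      have h00 := hgeq'.self_of_nhds
      rw [h0, hw0] at h00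
      simp at h00
      exact hg0 h00.symm
    · exact h
  -- strict differentiability: little-o estimate
  have hsd := hF.hasStrictFDerivAt
  have hc : Filter.Tendsto (fun s : ℝ => ((s, u s), (s, v s))) (𝓝 0)
      (𝓝 (((0:ℝ), (0:ℝ)), ((0:ℝ), (0:ℝ)))) := by
    have hut : Filter.Tendsto u (𝓝 0) (𝓝 0) := by
      simpa [hu0] using hu.continuousAt.tendsto
    have hvt : Filter.Tendsto v (𝓝 0) (𝓝 0) := by
      simpa [hv0] using hv.continuousAt.tendsto
    exact (tendsto_id.prodMk_nhds hut).prodMk_nhds (tendsto_id.prodMk_nhds hvt)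
  have hL2 : ∀ x : ℝ, L (0, x) = x * lam := by
    intro x
    have hx : ((0:ℝ), x) = x • ((0:ℝ), (1:ℝ)) := by simp
    rw [hx, map_smul, smul_eq_mul, hlamdef]
  have h1 := hsd.isLittleO.comp_tendsto hc
  have ho : (fun s : ℝ => F (s, u s) - F (s, v s) - w s * lam) =o[𝓝 0] w := by
    have h2 : ∀ s : ℝ, ((s, u s) - (s, v s)) = ((0:ℝ), w s) := by
      intro s; simp [hwdef, Prod.ext_iff]
    have h1' : (fun s : ℝ => F (s, u s) - F (s, v s) - w s * lam)
        =o[𝓝 0] (fun s : ℝ => ((0:ℝ), w s)) := by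
      refine h1.congr (fun s => ?_) (fun s => ?_)
      · show F (s, u s) - F (s, v s) - L ((s, u s) - (s, v s)) = _
        rw [h2 s, hL2]
      · exact h2 s
    refine h1'.trans_isBigO (Asymptotics.isBigO_of_le _ fun s => ?_)
    simp [Prod.norm_def]
  set q : ℝ → ℝ := fun s => (F (s, u s) - F (s, v s) - w s * lam) / w s with hqdef
  have hq0 : Filter.Tendsto q (𝓝 0) (𝓝 0) := ho.tendsto_div_nhds_zero
  -- eventual facts
  have hgne : ∀ᶠ s in 𝓝 (0:ℝ), g s ≠ 0 :=
    hg.continuousAt.eventually_ne hg0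
  have hudiff : ∀ᶠ s in 𝓝 (0:ℝ), DifferentiableAt ℝ u s := by
    filter_upwards [hu.eventually_analyticAt] with s hs using hs.differentiableAt
  have hvdiff : ∀ᶠ s in 𝓝 (0:ℝ), DifferentiableAt ℝ v s := by
    filter_upwards [hv.eventually_analyticAt] with s hs using hs.differentiableAt
  have hgdiff : ∀ᶠ s in 𝓝 (0:ℝ), DifferentiableAt ℝ g s := by
    filter_upwards [hg.eventually_analyticAt] with s hs using hs.differentiableAt
  -- key identity on the punctured neighborhood
  have hkey : ∀ᶠ s in 𝓝[≠] (0:ℝ),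
      (m : ℝ) * g s + s * deriv g s = q s * g s + lam * g s := by
    filter_upwards [eventually_nhdsWithin_of_eventually_nhds hue,
      eventually_nhdsWithin_of_eventually_nhds hve,
      eventually_nhdsWithin_of_eventually_nhds hgeq'.eventually_nhds,
      eventually_nhdsWithin_of_eventually_nhds hgne,
      eventually_nhdsWithin_of_eventually_nhds hudiff,
      eventually_nhdsWithin_of_eventually_nhds hvdiff,
      eventually_nhdsWithin_of_eventually_nhds hgdiff,
      self_mem_nhdsWithin] with s hu' hv' hloc hgs hud hvd hgd (hs : s ≠ 0)
    -- derivative of w at s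
    have hwd : deriv w s = (m : ℝ) * s ^ (m - 1) * g s + s ^ m * deriv g s := by
      have : deriv w s = deriv (fun t : ℝ => t ^ m * g t) s :=
        Filter.EventuallyEq.deriv_eq hloc
      rw [this, deriv_fun_mul (differentiableAt_pow m) hgd]
      simp [mul_comm]
    have hwd2 : deriv w s = deriv u s - deriv v s :=
      deriv_sub hud hvd
    have hwsne : w s ≠ 0 := by
      rw [hloc.self_of_nhds]
      exact mul_ne_zero (pow_ne_zero m hs) hgs
    have heq : s * deriv w s = q s * w s + lam * w s := by
      rw [hwd2, mul_sub, hu', hv', hqdef]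
      field_simp
      ring
    have hsm : s ^ m ≠ 0 := pow_ne_zero m hs
    have hpow : s * s ^ (m - 1) = s ^ m := by
      rw [← pow_succ']
      congr 1
      omega
    have hexp : s ^ m * ((m : ℝ) * g s + s * deriv g s)
        = s ^ m * (q s * g s + lam * g s) := by
      have lhs' : s * deriv w s = s ^ m * ((m : ℝ) * g s + s * deriv g s) := by
        rw [hwd]
        rw [mul_add, mul_add]
        rw [show s * ((m:ℝ) * s ^ (m-1) * g s) = (m:ℝ) * (s * s ^ (m-1)) * g s by ring, hpow]
        ring
      have rhs' : q s * w s + lam * w s = s ^ m * (q s * g s + lam * g s) := by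
        rw [hloc.self_of_nhds]; ring
      rw [← lhs', ← rhs', heq]
    exact mul_left_cancel₀ hsm hexp
  -- limits of both sides
  have hgcont : Filter.Tendsto g (𝓝 0) (𝓝 (g 0)) := hg.continuousAt.tendsto
  have hdgcont : Filter.Tendsto (deriv g) (𝓝 0) (𝓝 (deriv g 0)) := by
    obtain ⟨sU, hsU, hAn⟩ := hg.eventually_analyticAt.exists_mem
    obtain ⟨t, hts, hto, hmem⟩ := mem_nhds_iff.mp hsU
    have : AnalyticOnNhd ℝ g t := fun x hx => hAn x (hts hx)
    exact (this.deriv 0 hmem).continuousAt.tendsto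
  have hA : Filter.Tendsto (fun s : ℝ => (m : ℝ) * g s + s * deriv g s) (𝓝[≠] 0)
      (𝓝 ((m : ℝ) * g 0)) := by
    have : Filter.Tendsto (fun s : ℝ => (m : ℝ) * g s + s * deriv g s) (𝓝 0)
        (𝓝 ((m : ℝ) * g 0 + 0 * deriv g 0)) :=
      ((hgcont.const_mul _).add (tendsto_id.mul hdgcont))
    simpa using this.mono_left nhdsWithin_le_nhds
  have hB : Filter.Tendsto (fun s : ℝ => q s * g s + lam * g s) (𝓝[≠] 0)
      (𝓝 (lam * g 0)) := by
    have : Filter.Tendsto (fun s : ℝ => q s * g s + lam * g s) (𝓝 0)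
        (𝓝 (0 * g 0 + lam * g 0)) :=
      ((hq0.mul hgcont).add (hgcont.const_mul _))
    simpa using this.mono_left nhdsWithin_le_nhds
  have hmain : (m : ℝ) * g 0 = lam * g 0 :=
    tendsto_nhds_unique (hA.congr' hkey) hB
  have : lam = (m : ℝ) := (mul_right_cancel₀ hg0 hmain).symm
  exact hlam ⟨m, hm1, this⟩
end

section
/- Let B(z,w) = (z₁w^{α₁},…,z_nw^{α_n}, w²) with integers α_j ≥ 2, let ℓ ≥ max{α_n, 1}, and let Ĥ = (F̂, Ĝ): (ℂ^{n+1},0) → (ℂ^{n+1},0) be a germ of a holomorphic map satisfying Ĝ(z,w) = w + w^{2(ℓ+1)}·δ(z,w) for some holomorphic δ, and F̂(z,w) = z + O(ℓ+1). Suppose M̂ is a germ at 0 of a real-analytic hypersurface of the form Im w = (Re w)^{k}·ρ(z,z̄,Re w) with k ≥ 1 and ρ real-analytic, and 2(ℓ+1) > k. Then the image Ĥ(M̂) is again (the germ of) a real-analytic hypersurface of the form Im w = (Re w)^{k}·ρ'(z,z̄,Re w) for some real-analytic ρ'. -/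
open scoped Topology ComplexConjugate

/-- The real hypersurface `Im w = (Re w)^k · ρ(z, z̄, Re w)` in `ℂⁿ × ℂ`
(`z̄` being determined by `z`, the function `ρ` is recorded as a function
of `(z, s)`). -/
def graphOf' (n k : ℕ) (ρ : (Fin n → ℂ) → ℝ → ℝ) : Set ((Fin n → ℂ) × ℂ) :=
  {p | p.2.im = p.2.re ^ k * ρ p.1 p.2.re}

open Complex Asymptotics Filter

/-- Auxiliary: parametrization of the hypersurface `Im w = (Re w)^k ρ`. -/
def chiF (n k : ℕ) (ρ : (Fin n → ℂ) → ℝ → ℝ) (q : (Fin n → ℂ) × ℝ) : (Fin n → ℂ) × ℂ :=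
  (q.1, (q.2 : ℂ) + (↑(q.2 ^ k * ρ q.1 q.2) : ℂ) * Complex.I)

/-- Auxiliary: the unit `u` with `w = s·u` along the parametrization. -/
def uF (n k : ℕ) (ρ : (Fin n → ℂ) → ℝ → ℝ) (q : (Fin n → ℂ) × ℝ) : ℂ :=
  1 + (↑(q.2 ^ (k - 1) * ρ q.1 q.2) : ℂ) * Complex.I

/-- Auxiliary: real part of `u^N δ∘χ`. -/
def AF (n k N : ℕ) (ρ : (Fin n → ℂ) → ℝ → ℝ) (δ : (Fin n → ℂ) × ℂ → ℂ)
    (q : (Fin n → ℂ) × ℝ) : ℝ :=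
  ((uF n k ρ q) ^ N * δ (chiF n k ρ q)).re

/-- Auxiliary: imaginary part of `u^N δ∘χ`. -/
def BF (n k N : ℕ) (ρ : (Fin n → ℂ) → ℝ → ℝ) (δ : (Fin n → ℂ) × ℂ → ℂ)
    (q : (Fin n → ℂ) × ℝ) : ℝ :=
  ((uF n k ρ q) ^ N * δ (chiF n k ρ q)).im

/-- Auxiliary: the base map `(z,s) ↦ (F̂(χ(z,s)), Re Ĝ(χ(z,s)))`. -/
def betaF (n k N : ℕ) (ρ : (Fin n → ℂ) → ℝ → ℝ) (δ : (Fin n → ℂ) × ℂ → ℂ)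
    (Fh : (Fin n → ℂ) × ℂ → Fin n → ℂ) (q : (Fin n → ℂ) × ℝ) : (Fin n → ℂ) × ℝ :=
  (Fh (chiF n k ρ q), q.2 + q.2 ^ N * AF n k N ρ δ q)

/-- Auxiliary: `v` with `Re Ĝ ∘ χ = s·v`. -/
def vF (n k N : ℕ) (ρ : (Fin n → ℂ) → ℝ → ℝ) (δ : (Fin n → ℂ) × ℂ → ℂ)
    (q : (Fin n → ℂ) × ℝ) : ℝ :=
  1 + q.2 ^ (N - 1) * AF n k N ρ δ q

/-- Auxiliary: `c` with `Im Ĝ ∘ χ = s^k·c`. -/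
def cF (n k N : ℕ) (ρ : (Fin n → ℂ) → ℝ → ℝ) (δ : (Fin n → ℂ) × ℂ → ℂ)
    (q : (Fin n → ℂ) × ℝ) : ℝ :=
  ρ q.1 q.2 + q.2 ^ (N - k) * BF n k N ρ δ q

/-- Complex-arithmetic identity for the real and imaginary parts of `w + w^N d`. -/
lemma key_alg (k N : ℕ) (hk : 1 ≤ k) (s t : ℝ) (d : ℂ) :
    ((s:ℂ) + ↑(s^k*t)*I + ((s:ℂ) + ↑(s^k*t)*I)^N * d).re
      = s + s^N * ((1 + (↑(s^(k-1)*t):ℂ)*I)^N * d).re ∧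
    ((s:ℂ) + ↑(s^k*t)*I + ((s:ℂ) + ↑(s^k*t)*I)^N * d).im
      = s^k*t + s^N * ((1 + (↑(s^(k-1)*t):ℂ)*I)^N * d).im := by
  obtain ⟨m, rfl⟩ : ∃ m, k = m + 1 := ⟨k - 1, by omega⟩
  have hw : (s:ℂ) + ↑(s^(m+1)*t)*I = ↑s * (1 + (↑(s^m*t):ℂ)*I) := by push_cast; ring
  have hure : ((1:ℂ) + (↑(s^m*t):ℂ)*I).re = 1 := by
    rw [Complex.add_re, Complex.mul_I_re]; simp [← Complex.ofReal_pow]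
  have huim : ((1:ℂ) + (↑(s^m*t):ℂ)*I).im = s^m*t := by
    rw [Complex.add_im, Complex.mul_I_im]; simp [← Complex.ofReal_pow]
  simp only [Nat.add_sub_cancel, hw, mul_pow, ← Complex.ofReal_pow]
  simp only [Complex.add_re, Complex.add_im, Complex.mul_re, Complex.mul_im,
    Complex.ofReal_re, Complex.ofReal_im, hure, huim]
  generalize ((1:ℂ) + (↑(s^m*t):ℂ)*I)^N = U
  rw [pow_succ]
  constructor <;> ring

/-- A function dominated near `0` by `‖x‖^m`, `m ≥ 2`, after subtracting a continuous
linear map, has that linear map as derivative at `0`. -/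
lemma hasFDerivAt_of_pow_bound {G H : Type*} [NormedAddCommGroup G] [NormedSpace ℝ G]
    [NormedAddCommGroup H] [NormedSpace ℝ H] {f : G → H} {L : G →L[ℝ] H} {C : ℝ} {m : ℕ}
    (hm : 2 ≤ m) (h : ∀ᶠ x in 𝓝 (0:G), ‖f x - L x‖ ≤ C * ‖x‖ ^ m) : HasFDerivAt f L 0 := by
  have hf0 : f 0 = 0 := by
    have h0 := h.self_of_nhds
    simpa [zero_pow (by omega : m ≠ 0)] using h0
  rw [hasFDerivAt_iff_isLittleO_nhds_zero]
  have h1 : (fun x => f x - L x) =O[𝓝 (0:G)] (fun x => ‖x‖ ^ m) :=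
    IsBigO.of_bound C (by
      filter_upwards [h] with x hx
      simpa [Real.norm_eq_abs, _root_.abs_of_nonneg (pow_nonneg (norm_nonneg x) m)] using hx)
  have h2 : (fun x : G => ‖x‖ ^ m) =o[𝓝 0] (fun x => x) := isLittleO_norm_pow_id (by omega)
  have h3 := h1.trans_isLittleO h2
  simpa [hf0] using h3

/-- Analytic local inverse package, from the inverse function theorem. -/
lemma inv_pack {G : Type*} [NormedAddCommGroup G] [NormedSpace ℝ G] [CompleteSpace G] {β : G → G}
    (hβana : AnalyticAt ℝ β 0)
    (hβd : HasFDerivAt β ((ContinuousLinearEquiv.refl ℝ G : G ≃L[ℝ] G) : G →L[ℝ] G) 0)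
    (hβ0 : β 0 = 0) :
    ∃ ψ : G → G, AnalyticAt ℝ ψ 0 ∧ ψ 0 = 0 ∧ ContinuousAt ψ 0 ∧
      (∀ᶠ q in 𝓝 (0:G), ψ (β q) = q) ∧ (∀ᶠ x in 𝓝 (0:G), β (ψ x) = x) := by
  have hstrict : HasStrictFDerivAt β
      ((ContinuousLinearEquiv.refl ℝ G : G ≃L[ℝ] G) : G →L[ℝ] G) 0 :=
    (hβana.contDiffAt (n := 1)).hasStrictFDerivAt' hβd one_ne_zero
  have hcoe : ⇑(hstrict.toOpenPartialHomeomorph β) = β := hstrict.toOpenPartialHomeomorph_coe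
  have h2 : (hstrict.toOpenPartialHomeomorph β) 0 = 0 := by rw [hcoe]; exact hβ0
  refine ⟨hstrict.localInverse β _ 0, ?_, ?_, ?_, ?_, ?_⟩
  · have h1 : AnalyticAt ℝ (hstrict.toOpenPartialHomeomorph β).symm
        ((hstrict.toOpenPartialHomeomorph β) 0) :=
      OpenPartialHomeomorph.analyticAt_symm' _ hstrict.mem_toOpenPartialHomeomorph_source
        (by rw [hcoe]; exact hβana) (by rw [hcoe]; exact hβd.fderiv)
    rw [h2] at h1
    exact h1
  · have := hstrict.localInverse_apply_image
    rwa [hβ0] at this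
  · have := hstrict.localInverse_continuousAt
    rwa [hβ0] at this
  · exact hstrict.eventually_left_inverse
  · have := hstrict.eventually_right_inverse
    rwa [hβ0] at this

set_option maxHeartbeats 1000000 in
/-- Final step of Proposition 5.2: if `Ĥ = (F̂,Ĝ)` is a germ of a holomorphic
map at `0` with `Ĝ(z,w) = w + w^{2(ℓ+1)}δ(z,w)`, `F̂(z,w) = z + O(ℓ+1)`,
`ℓ ≥ max{α_n,1}`, and `M̂` is a germ of a real-analytic hypersurface
`Im w = (Re w)^k ρ(z,z̄,Re w)` with `1 ≤ k < 2(ℓ+1)`, then the image `Ĥ(M̂)`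
is again a germ of a hypersurface of the form `Im w = (Re w)^k ρ'(z,z̄,Re w)`. -/
theorem stmt18 (n : ℕ) (hn : 1 ≤ n) (α : Fin n → ℕ) (hα : ∀ j, 2 ≤ α j)
    (ℓ : ℕ) (hℓ1 : 1 ≤ ℓ) (hℓα : ∀ j, α j ≤ ℓ)
    (k : ℕ) (hk : 1 ≤ k) (hkℓ : k < 2 * (ℓ + 1))
    (Fh : (Fin n → ℂ) × ℂ → Fin n → ℂ) (Gh : (Fin n → ℂ) × ℂ → ℂ)
    (δ : (Fin n → ℂ) × ℂ → ℂ)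
    (hFh : AnalyticAt ℂ Fh 0) (hδ : AnalyticAt ℂ δ 0)
    (hGh : ∀ᶠ p in 𝓝 (0 : (Fin n → ℂ) × ℂ),
      Gh p = p.2 + p.2 ^ (2 * (ℓ + 1)) * δ p)
    (hFord : ∃ C : ℝ, ∀ᶠ p in 𝓝 (0 : (Fin n → ℂ) × ℂ),
      ‖Fh p - p.1‖ ≤ C * ‖p‖ ^ (ℓ + 1))
    (ρ : (Fin n → ℂ) → ℝ → ℝ)
    (hρ : AnalyticAt ℝ (fun q : (Fin n → ℂ) × ℝ => ρ q.1 q.2) 0) :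
    ∃ ρ' : (Fin n → ℂ) → ℝ → ℝ,
      AnalyticAt ℝ (fun q : (Fin n → ℂ) × ℝ => ρ' q.1 q.2) 0 ∧
      ∃ U ∈ 𝓝 (0 : (Fin n → ℂ) × ℂ), ∃ V ∈ 𝓝 (0 : (Fin n → ℂ) × ℂ),
        (fun p => (Fh p, Gh p)) '' (graphOf' n k ρ ∩ U) ∩ V =
          graphOf' n k ρ' ∩ V := by
  classical
  set N := 2 * (ℓ + 1) with hNdef
  have hN2 : 2 ≤ N := by omega
  have hkN : k < N := hkℓ
  -- abbreviations
  set χ := chiF n k ρ with hχ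
  set A := AF n k N ρ δ with hA
  set B := BF n k N ρ δ with hB
  set β := betaF n k N ρ δ Fh with hβ
  set v := vF n k N ρ δ with hv
  set c := cF n k N ρ δ with hc
  -- basic facts about χ
  have hχ0 : χ 0 = 0 := by
    simp [hχ, chiF, zero_pow (by omega : k ≠ 0)]
  have hχana : AnalyticAt ℝ χ 0 := by
    exact analyticAt_fst.prod (((Complex.ofRealCLM.analyticAt _).comp analyticAt_snd).add
      (((Complex.ofRealCLM.analyticAt _).comp ((analyticAt_snd.pow k).mul hρ)).mul
        analyticAt_const))
  have hχcont : Tendsto χ (𝓝 0) (𝓝 0) := by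
    have h := hχana.continuousAt
    rwa [ContinuousAt, hχ0] at h
  -- analyticity of the building blocks
  have hδχ : AnalyticAt ℝ (fun q => δ (χ q)) 0 := by
    have h1 : AnalyticAt ℝ δ (χ 0) := by rw [hχ0]; exact hδ.restrictScalars
    exact h1.comp hχana
  have huana : AnalyticAt ℝ (uF n k ρ) 0 := by
    exact analyticAt_const.add
      (((Complex.ofRealCLM.analyticAt _).comp ((analyticAt_snd.pow (k-1)).mul hρ)).mul
        analyticAt_const)
  have hAana : AnalyticAt ℝ A 0 :=
    (Complex.reCLM.analyticAt _).comp ((huana.pow N).mul hδχ)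
  have hBana : AnalyticAt ℝ B 0 :=
    (Complex.imCLM.analyticAt _).comp ((huana.pow N).mul hδχ)
  have hvana : AnalyticAt ℝ v 0 :=
    analyticAt_const.add ((analyticAt_snd.pow (N-1)).mul hAana)
  have hcana : AnalyticAt ℝ c 0 :=
    hρ.add ((analyticAt_snd.pow (N-k)).mul hBana)
  -- `Fh 0 = 0` and `β 0 = 0`
  obtain ⟨C, hC⟩ := hFord
  have hC' : ∀ᶠ p in 𝓝 (0 : (Fin n → ℂ) × ℂ), ‖Fh p - p.1‖ ≤ |C| * ‖p‖ ^ (ℓ + 1) := by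
    filter_upwards [hC] with p hp
    exact hp.trans (mul_le_mul_of_nonneg_right (le_abs_self C) (by positivity))
  have hFh0 : Fh 0 = 0 := by
    have h0 := hC'.self_of_nhds
    simp only [Prod.fst_zero, sub_zero, norm_zero, zero_pow (by omega : ℓ + 1 ≠ 0),
      mul_zero] at h0
    exact norm_le_zero_iff.mp h0
  have hχ0' : chiF n k ρ 0 = 0 := hχ0
  have hβ0 : β 0 = 0 := by
    simp [hβ, betaF, hχ0', hFh0, zero_pow (by omega : N ≠ 0), Prod.ext_iff]
  have hβana : AnalyticAt ℝ β 0 := by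
    have h1 : AnalyticAt ℝ Fh (χ 0) := by rw [hχ0]; exact hFh.restrictScalars
    exact (h1.comp hχana).prod (analyticAt_snd.add ((analyticAt_snd.pow N).mul hAana))
  -- the quadratic bound for `β - id`
  have hρb : ∀ᶠ q in 𝓝 (0 : (Fin n → ℂ) × ℝ), |ρ q.1 q.2| ≤ |ρ 0 0| + 1 := by
    have h := hρ.continuousAt
    have h2 := h.eventually_mem (Metric.ball_mem_nhds (ρ (0 : Fin n → ℂ) (0:ℝ)) one_pos)
    filter_upwards [h2] with q hq
    have : |ρ q.1 q.2 - ρ 0 0| < 1 := by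
      simpa [Real.dist_eq] using hq
    have := abs_sub_abs_le_abs_sub (ρ q.1 q.2) (ρ 0 0)
    linarith [abs_sub_abs_le_abs_sub (ρ q.1 q.2) (ρ 0 0)]
  have hAb : ∀ᶠ q in 𝓝 (0 : (Fin n → ℂ) × ℝ), |A q| ≤ |A 0| + 1 := by
    have h := hAana.continuousAt
    have h2 := h.eventually_mem (Metric.ball_mem_nhds (A 0) one_pos)
    filter_upwards [h2] with q hq
    have : |A q - A 0| < 1 := by simpa [Real.dist_eq] using hq
    linarith [abs_sub_abs_le_abs_sub (A q) (A 0)]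
  have hsmall : ∀ᶠ q in 𝓝 (0 : (Fin n → ℂ) × ℝ), ‖q‖ ≤ 1 := by
    have := Metric.ball_mem_nhds (0 : (Fin n → ℂ) × ℝ) one_pos
    filter_upwards [this] with q hq
    have : dist q 0 < 1 := hq
    rw [dist_zero_right] at this
    linarith
  set R : ℝ := |ρ 0 0| + 1 with hR
  have hχb : ∀ᶠ q in 𝓝 (0 : (Fin n → ℂ) × ℝ), ‖χ q‖ ≤ (1 + R) * ‖q‖ := by
    filter_upwards [hρb, hsmall] with q h1 h2
    have hq1 : ‖q.1‖ ≤ ‖q‖ := norm_fst_le q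
    have hq2 : |q.2| ≤ ‖q‖ := by
      have := norm_snd_le q
      simpa [Real.norm_eq_abs] using this
    have hq2' : |q.2| ^ k ≤ |q.2| := by
      calc |q.2| ^ k ≤ |q.2| ^ 1 :=
            pow_le_pow_of_le_one (abs_nonneg _) (le_trans hq2 h2) hk
        _ = |q.2| := pow_one _
    have hwb : ‖(q.2 : ℂ) + (↑(q.2 ^ k * ρ q.1 q.2) : ℂ) * Complex.I‖ ≤ (1 + R) * ‖q‖ := by
      have := norm_add_le ((q.2 : ℂ)) ((↑(q.2 ^ k * ρ q.1 q.2) : ℂ) * Complex.I)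
      have h3 : ‖(q.2 : ℂ)‖ = |q.2| := by simp [Complex.norm_real]
      have h4 : ‖(↑(q.2 ^ k * ρ q.1 q.2) : ℂ) * Complex.I‖ = |q.2| ^ k * |ρ q.1 q.2| := by
        simp [Complex.norm_real, abs_mul, _root_.abs_pow]
      have h5 : |q.2| ^ k * |ρ q.1 q.2| ≤ |q.2| * R := by
        have : |ρ q.1 q.2| ≤ R := by rw [hR]; exact h1
        calc |q.2| ^ k * |ρ q.1 q.2| ≤ |q.2| * |ρ q.1 q.2| :=
              mul_le_mul_of_nonneg_right hq2' (abs_nonneg _)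
          _ ≤ |q.2| * R := mul_le_mul_of_nonneg_left this (abs_nonneg _)
      have hR0 : (0:ℝ) ≤ R := by rw [hR]; positivity
      calc ‖(q.2 : ℂ) + (↑(q.2 ^ k * ρ q.1 q.2) : ℂ) * Complex.I‖
          ≤ |q.2| + |q.2| * R := by rw [h3] at this; rw [h4] at this; linarith
        _ ≤ ‖q‖ + ‖q‖ * R := by nlinarith [norm_nonneg q]
        _ = (1 + R) * ‖q‖ := by ring
    have hfinal : ‖χ q‖ = max ‖q.1‖ ‖(q.2 : ℂ) + (↑(q.2 ^ k * ρ q.1 q.2) : ℂ) * Complex.I‖ := by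
      simp [hχ, chiF, Prod.norm_def]
    rw [hfinal]
    apply max_le
    · have hR0 : (0:ℝ) ≤ R := by rw [hR]; positivity
      nlinarith [norm_nonneg q]
    · exact hwb
  set K1 : ℝ := |C| * (1 + R) ^ (ℓ + 1) with hK1
  set K2 : ℝ := |A 0| + 1 with hK2
  have hR0 : (0:ℝ) ≤ R := by rw [hR]; positivity
  have hK10 : (0:ℝ) ≤ K1 := by rw [hK1]; positivity
  have hK20 : (0:ℝ) ≤ K2 := by rw [hK2]; positivity
  have hβq : ∀ᶠ q in 𝓝 (0 : (Fin n → ℂ) × ℝ), ‖β q - q‖ ≤ (K1 + K2) * ‖q‖ ^ 2 := by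
    filter_upwards [hχcont.eventually hC', hχb, hAb, hsmall] with q h1 h2 h3 h4
    have hq2 : |q.2| ≤ ‖q‖ := by
      have := norm_snd_le q
      simpa [Real.norm_eq_abs] using this
    have hpow2 : ‖q‖ ^ (ℓ + 1) ≤ ‖q‖ ^ 2 :=
      pow_le_pow_of_le_one (norm_nonneg _) h4 (by omega)
    have hpowN : ‖q‖ ^ N ≤ ‖q‖ ^ 2 :=
      pow_le_pow_of_le_one (norm_nonneg _) h4 hN2
    have e1 : ‖Fh (χ q) - q.1‖ ≤ K1 * ‖q‖ ^ 2 := by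
      have hfst : (χ q).1 = q.1 := by simp [hχ, chiF]
      rw [hfst] at h1
      calc ‖Fh (χ q) - q.1‖ ≤ |C| * ‖χ q‖ ^ (ℓ + 1) := h1
        _ ≤ |C| * ((1 + R) * ‖q‖) ^ (ℓ + 1) := by
            gcongr
        _ = K1 * ‖q‖ ^ (ℓ + 1) := by rw [hK1, mul_pow]; ring
        _ ≤ K1 * ‖q‖ ^ 2 := by gcongr
    have e2 : ‖q.2 + q.2 ^ N * A q - q.2‖ ≤ K2 * ‖q‖ ^ 2 := by
      have : q.2 + q.2 ^ N * A q - q.2 = q.2 ^ N * A q := by ring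
      rw [this, Real.norm_eq_abs, abs_mul, _root_.abs_pow]
      calc |q.2| ^ N * |A q| ≤ ‖q‖ ^ N * K2 := by
            have h3' : |A q| ≤ K2 := by rw [hK2]; exact h3
            have : |q.2| ^ N ≤ ‖q‖ ^ N := pow_le_pow_left₀ (abs_nonneg _) hq2 N
            exact mul_le_mul this h3' (abs_nonneg _) (pow_nonneg (norm_nonneg _) _)
        _ ≤ ‖q‖ ^ 2 * K2 := by gcongr
        _ = K2 * ‖q‖ ^ 2 := by ring
    have hsub1 : (β q - q).1 = Fh (χ q) - q.1 := by
      simp [hβ, betaF, hχ, Prod.fst_sub]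
    have hsub2 : (β q - q).2 = q.2 + q.2 ^ N * A q - q.2 := by
      simp [hβ, betaF, hA, Prod.snd_sub]
    rw [Prod.norm_def, hsub1, hsub2]
    apply max_le
    · calc ‖Fh (χ q) - q.1‖ ≤ K1 * ‖q‖ ^ 2 := e1
        _ ≤ (K1 + K2) * ‖q‖ ^ 2 := by nlinarith [sq_nonneg ‖q‖, norm_nonneg q]
    · calc ‖q.2 + q.2 ^ N * A q - q.2‖ ≤ K2 * ‖q‖ ^ 2 := e2
        _ ≤ (K1 + K2) * ‖q‖ ^ 2 := by nlinarith [sq_nonneg ‖q‖, norm_nonneg q]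
  have hβd : HasFDerivAt β
      ((ContinuousLinearEquiv.refl ℝ ((Fin n → ℂ) × ℝ) : _ ≃L[ℝ] _) :
        (Fin n → ℂ) × ℝ →L[ℝ] (Fin n → ℂ) × ℝ) 0 := by
    apply hasFDerivAt_of_pow_bound (le_refl 2)
    filter_upwards [hβq] with q hq
    simpa using hq
  -- the analytic local inverse
  obtain ⟨ψ, hψana, hψ0, hψcont, hψβ, hβψ⟩ := inv_pack hβana hβd hβ0
  -- the new defining function
  set ρ' : (Fin n → ℂ) → ℝ → ℝ := fun z s => c (ψ (z, s)) / (v (ψ (z, s))) ^ k with hρ'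
  have hv0 : v 0 = 1 := by
    simp [hv, vF, zero_pow (by omega : N - 1 ≠ 0)]
  refine ⟨ρ', ?_, ?_⟩
  · -- analyticity of ρ'
    have hcψ : AnalyticAt ℝ (fun x => c (ψ x)) 0 := by
      have h1 : AnalyticAt ℝ c (ψ 0) := by rw [hψ0]; exact hcana
      exact h1.comp hψana
    have hvψ : AnalyticAt ℝ (fun x => v (ψ x)) 0 := by
      have h1 : AnalyticAt ℝ v (ψ 0) := by rw [hψ0]; exact hvana
      exact h1.comp hψana
    have hne : (v (ψ (0 : (Fin n → ℂ) × ℝ))) ^ k ≠ 0 := by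
      rw [hψ0, hv0]; simp
    exact hcψ.div (hvψ.pow k) hne
  -- the Gh formula along χ
  have hGhχ : ∀ᶠ q in 𝓝 (0 : (Fin n → ℂ) × ℝ),
      (Gh (χ q)).re = q.2 + q.2 ^ N * A q ∧
      (Gh (χ q)).im = q.2 ^ k * ρ q.1 q.2 + q.2 ^ N * B q := by
    filter_upwards [hχcont.eventually hGh] with q hq
    have h2 : (χ q).2 = (q.2 : ℂ) + (↑(q.2 ^ k * ρ q.1 q.2) : ℂ) * Complex.I := by
      simp [hχ, chiF]
    rw [h2] at hq
    rw [hq]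
    exact key_alg k N hk q.2 (ρ q.1 q.2) (δ (χ q))
  have hvne : ∀ᶠ q in 𝓝 (0 : (Fin n → ℂ) × ℝ), v q ≠ 0 := by
    have h := hvana.continuousAt
    have : v 0 ≠ 0 := by rw [hv0]; norm_num
    exact h.eventually_ne this
  have hΩev : ∀ᶠ q in 𝓝 (0 : (Fin n → ℂ) × ℝ),
      ((Gh (χ q)).re = q.2 + q.2 ^ N * A q ∧
       (Gh (χ q)).im = q.2 ^ k * ρ q.1 q.2 + q.2 ^ N * B q) ∧ v q ≠ 0 ∧ ψ (β q) = q := by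
    filter_upwards [hGhχ, hvne, hψβ] with q h1 h2 h3
    exact ⟨h1, h2, h3⟩
  obtain ⟨Ω, hΩmem, hΩprop⟩ := eventually_iff_exists_mem.mp hΩev
  -- key identities on Ω
  have key : ∀ q ∈ Ω, (Gh (χ q)).re = (β q).2 ∧
      (Gh (χ q)).im = ((β q).2) ^ k * ρ' (β q).1 (β q).2 := by
    intro q hq
    obtain ⟨⟨h1, h2⟩, hvq, hψβq⟩ := hΩprop q hq
    have hb2 : (β q).2 = q.2 + q.2 ^ N * A q := by simp [hβ, betaF, hA]
    constructor
    · rw [h1, hb2]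
    · rw [h2]
      have hρ'e : ρ' (β q).1 (β q).2 = c q / v q ^ k := by
        have hpair : ψ ((β q).1, (β q).2) = q := by
          rw [show ((β q).1, (β q).2) = β q from rfl]; exact hψβq
        simp only [hρ', hpair]
      rw [hρ'e, hb2]
      have hNs : q.2 ^ N = q.2 * q.2 ^ (N - 1) := by
        conv_lhs => rw [show N = (N-1)+1 by omega]
        rw [pow_succ]; ring
      have hks : q.2 ^ N = q.2 ^ k * q.2 ^ (N - k) := by
        rw [← pow_add]; congr 1; omega
      have hfac : q.2 + q.2 ^ N * A q = q.2 * v q := by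
        rw [hv, vF]; rw [hNs]; ring
      rw [hfac, mul_pow]
      have hvk : v q ^ k ≠ 0 := pow_ne_zero _ hvq
      field_simp
      rw [hc, cF, hks]
      ring
  -- the second neighborhood data
  have hΩ'ev : ∀ᶠ x in 𝓝 (0 : (Fin n → ℂ) × ℝ), β (ψ x) = x ∧ ψ x ∈ Ω := by
    have hmem : Ω ∈ 𝓝 (ψ 0) := by rw [hψ0]; exact hΩmem
    filter_upwards [hβψ, hψcont.eventually_mem hmem] with x h1 h2
    exact ⟨h1, h2⟩
  obtain ⟨Ω', hΩ'mem, hΩ'prop⟩ := eventually_iff_exists_mem.mp hΩ'ev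
  -- π : projection to (z, Re w)
  set π : (Fin n → ℂ) × ℂ → (Fin n → ℂ) × ℝ := fun p => (p.1, p.2.re) with hπ
  have hπcont : Continuous π := continuous_fst.prodMk (Complex.continuous_re.comp continuous_snd)
  have hπ0 : π 0 = 0 := by simp [hπ, Prod.ext_iff]
  refine ⟨π ⁻¹' Ω, ?_, π ⁻¹' Ω', ?_, ?_⟩
  · apply hπcont.continuousAt.preimage_mem_nhds
    rw [hπ0]; exact hΩmem
  · apply hπcont.continuousAt.preimage_mem_nhds
    rw [hπ0]; exact hΩ'mem
  · ext x
    simp only [Set.mem_inter_iff, Set.mem_image, Set.mem_preimage, graphOf',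
      Set.mem_setOf_eq]
    constructor
    · rintro ⟨⟨p, ⟨hpM, hpU⟩, rfl⟩, hxV⟩
      refine ⟨?_, hxV⟩
      have hpχ : χ (p.1, p.2.re) = p := by
        rw [hχ, chiF]
        refine Prod.ext rfl ?_
        refine Complex.ext ?_ ?_
        · simp [Complex.add_re, Complex.mul_I_re, ← Complex.ofReal_pow]
        · simp only [Complex.add_im, Complex.mul_I_im, Complex.ofReal_im, Complex.ofReal_re,
            zero_add]
          exact hpM.symm
      have hqΩ : (p.1, p.2.re) ∈ Ω := hpU
      have hkey := key _ hqΩ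
      rw [hpχ] at hkey
      have hbfst : (β (p.1, p.2.re)).1 = Fh (χ (p.1, p.2.re)) := by simp [hβ, betaF, hχ]
      rw [hpχ] at hbfst
      show (Gh p).im = (Gh p).re ^ k * ρ' (Fh p) (Gh p).re
      rw [hkey.1, hkey.2, hbfst]
    · rintro ⟨hxG, hxV⟩
      refine ⟨?_, hxV⟩
      have hx' := hΩ'prop _ hxV
      set q₀ := ψ (x.1, x.2.re) with hq₀
      have hβq₀ : β q₀ = (x.1, x.2.re) := hx'.1
      have hkey := key q₀ hx'.2
      refine ⟨χ q₀, ⟨?_, ?_⟩, ?_⟩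
      · show (χ q₀).2.im = (χ q₀).2.re ^ k * ρ (χ q₀).1 (χ q₀).2.re
        rw [hχ, chiF]
        simp [Complex.add_re, Complex.add_im, Complex.mul_I_re, Complex.mul_I_im,
          ← Complex.ofReal_pow]
      · show π (χ q₀) ∈ Ω
        have : π (χ q₀) = q₀ := by
          rw [hχ, chiF, hπ]
          refine Prod.ext rfl ?_
          simp [Complex.add_re, Complex.mul_I_re, ← Complex.ofReal_pow]
        rw [this]
        exact hx'.2
      · have h1 : Fh (χ q₀) = x.1 := by
          have := congrArg Prod.fst hβq₀
          simpa [hβ, betaF] using this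
        have h2re : (Gh (χ q₀)).re = x.2.re := by
          rw [hkey.1, hβq₀]
        have h2im : (Gh (χ q₀)).im = x.2.im := by
          rw [hkey.2, hβq₀]
          exact hxG.symm
        exact Prod.ext h1 (Complex.ext h2re h2im)
end
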